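/- Let g : ℝⁿ → ℝ be L-smooth with constant L_{∇g} > 0, let x̂ : ℝ^d → ℝⁿ, and suppose f := g ∘ x̂ is L-smooth with constant L_{∇f} > 0. Fix θ ∈ ℝ^d, z ∈ ℝ^d, α ≥ 0, η ≤ 1 and λ ∈ ℝ, set θ' = θ − α z, and assume ‖z − ∇f(θ)‖ ≤ (1 − η)‖z‖. Let x̃₁, x̃₂ ∈ ℝⁿ and ε₁, ε₂ ≥ 0 satisfy ‖x̃₁ − x̂(θ)‖ ≤ ε₁ and ‖x̃₂ − x̂(θ')‖ ≤ ε₂. Define w = ‖∇g(x̃₁)‖ + ‖∇g(x̃₂)‖, ε̄ = max{ε₁, ε₂}, ψ(α) = [g(x̃₂) + ‖∇g(x̃₂)‖ ε₂ + (L_{∇g}/2) ε₂²] − [g(x̃₁) − ‖∇g(x̃₁)‖ ε₁ − (L_{∇g}/2) ε₁²] + λ α ‖z‖², and φ(α) = 2 w ε̄ + 2 L_{∇g} ε̄² + (α² L_{∇f}/2 + (λ − η) α) ‖z‖². Then ψ(α) ≤ φ(α). -/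

import Mathlib

set_option maxHeartbeats 1000000

open InnerProductSpace Set

/-- Descent lemma: a differentiable function with `L`-Lipschitz gradient satisfies the
quadratic upper/lower bound. -/
lemma descent_core {F : Type*} [NormedAddCommGroup F] [InnerProductSpace ℝ F]
    [CompleteSpace F] (g : F → ℝ) (L : ℝ) (hL : 0 ≤ L)
    (hg : Differentiable ℝ g)
    (hlip : ∀ x y, ‖gradient g x - gradient g y‖ ≤ L * ‖x - y‖) (x y : F) :
    |g y - g x - inner ℝ (gradient g x) (y - x)| ≤ L / 2 * ‖y - x‖ ^ 2 := by
  set v := y - x with hv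
  set c : ℝ := inner ℝ (gradient g x) v with hc
  set f : ℝ → ℝ := fun t => g (x + t • v) - t * c - g x with hf
  have hline : ∀ t : ℝ, HasDerivAt (fun t : ℝ => x + t • v) v t := by
    intro t
    simpa using ((hasDerivAt_id t).smul_const v).const_add x
  have hf' : ∀ t : ℝ, HasDerivAt f
      ((inner ℝ (gradient g (x + t • v) - gradient g x) v : ℝ)) t := by
    intro t
    have h2 : HasDerivAt (fun t : ℝ => g (x + t • v))
        ((inner ℝ (gradient g (x + t • v)) v : ℝ)) t := by
      have := ((hg (x + t • v)).hasGradientAt.hasFDerivAt).comp_hasDerivAt t (hline t)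
      simpa [HasGradientAt, HasGradientAtFilter, InnerProductSpace.toDual_apply_apply, Function.comp_def] using this
    have h3 : HasDerivAt (fun t : ℝ => t * c) c t := by
      simpa using (hasDerivAt_id t).mul_const c
    have := (h2.sub h3).sub_const (g x)
    simpa [inner_sub_left, hf, hc] using this
  set B : ℝ → ℝ := fun t => L * ‖v‖ ^ 2 / 2 * t ^ 2 with hB
  have hB' : ∀ t : ℝ, HasDerivAt B (L * ‖v‖ ^ 2 * t) t := by
    intro t
    have := (hasDerivAt_pow 2 t).const_mul (L * ‖v‖ ^ 2 / 2)
    refine this.congr_deriv ?_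
    norm_num
    ring
  have key : ∀ t ∈ Icc (0 : ℝ) 1, ‖f t‖ ≤ B t := by
    intro t ht
    refine image_norm_le_of_norm_deriv_right_le_deriv_boundary
      (f := f) (f' := fun t => (inner ℝ (gradient g (x + t • v) - gradient g x) v : ℝ))
      (a := 0) (b := 1)
      (fun t _ => (hf' t).continuousAt.continuousWithinAt)
      (fun t _ => (hf' t).hasDerivWithinAt) ?_ hB' ?_ ht
    · simp [hf, hB]
    · intro t ht
      have ht0 : 0 ≤ t := ht.1
      have h1 : |(inner ℝ (gradient g (x + t • v) - gradient g x) v : ℝ)| ≤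
          ‖gradient g (x + t • v) - gradient g x‖ * ‖v‖ := abs_real_inner_le_norm _ _
      have h2 : ‖gradient g (x + t • v) - gradient g x‖ ≤ L * (t * ‖v‖) := by
        have := hlip (x + t • v) x
        simpa [norm_smul, abs_of_nonneg ht0] using this
      calc ‖(inner ℝ (gradient g (x + t • v) - gradient g x) v : ℝ)‖
          ≤ ‖gradient g (x + t • v) - gradient g x‖ * ‖v‖ := h1
        _ ≤ L * (t * ‖v‖) * ‖v‖ := by
            exact mul_le_mul_of_nonneg_right h2 (norm_nonneg v)
        _ = L * ‖v‖ ^ 2 * t := by ring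
  have h1 := key 1 (by norm_num)
  have hxy : x + v = y := by simp [hv]
  simp only [hf, hB, one_smul, hxy, one_pow, mul_one, one_mul, Real.norm_eq_abs] at h1
  have h2 : |g y - g x - c| ≤ L * ‖v‖ ^ 2 / 2 := by
    have e : g y - g x - c = g y - c - g x := by ring
    rw [e]; exact h1
  linarith [h2]

theorem psi_le_phi
    {n d : ℕ} (g : EuclideanSpace ℝ (Fin n) → ℝ)
    (xhat : EuclideanSpace ℝ (Fin d) → EuclideanSpace ℝ (Fin n))
    (Lg Lf : ℝ) (hLg : 0 < Lg) (hLf : 0 < Lf)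
    (hgdiff : Differentiable ℝ g)
    (hglip : ∀ x y, ‖gradient g x - gradient g y‖ ≤ Lg * ‖x - y‖)
    (hfdiff : Differentiable ℝ (fun θ => g (xhat θ)))
    (hflip : ∀ θ₁ θ₂, ‖gradient (fun θ => g (xhat θ)) θ₁
        - gradient (fun θ => g (xhat θ)) θ₂‖ ≤ Lf * ‖θ₁ - θ₂‖)
    (θ z : EuclideanSpace ℝ (Fin d)) (α η lam : ℝ)
    (hα : 0 ≤ α) (hη : η ≤ 1)
    (herr : ‖z - gradient (fun θ' => g (xhat θ')) θ‖ ≤ (1 - η) * ‖z‖)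
    (xtilde₁ xtilde₂ : EuclideanSpace ℝ (Fin n))
    (ε₁ ε₂ : ℝ) (hε₁ : 0 ≤ ε₁) (hε₂ : 0 ≤ ε₂)
    (happrox₁ : ‖xtilde₁ - xhat θ‖ ≤ ε₁)
    (happrox₂ : ‖xtilde₂ - xhat (θ - α • z)‖ ≤ ε₂) :
    (g xtilde₂ + ‖gradient g xtilde₂‖ * ε₂ + Lg / 2 * ε₂ ^ 2)
      - (g xtilde₁ - ‖gradient g xtilde₁‖ * ε₁ - Lg / 2 * ε₁ ^ 2)
      + lam * α * ‖z‖ ^ 2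
    ≤ 2 * (‖gradient g xtilde₁‖ + ‖gradient g xtilde₂‖) * max ε₁ ε₂
      + 2 * Lg * (max ε₁ ε₂) ^ 2
      + (α ^ 2 * Lf / 2 + (lam - η) * α) * ‖z‖ ^ 2 := by
  set θ' := θ - α • z with hθ'
  set w₁ := ‖gradient g xtilde₁‖ with hw₁
  set w₂ := ‖gradient g xtilde₂‖ with hw₂
  set εb := max ε₁ ε₂ with hεb
  have hεb1 : ε₁ ≤ εb := le_max_left _ _
  have hεb2 : ε₂ ≤ εb := le_max_right _ _
  have hw₁0 : 0 ≤ w₁ := norm_nonneg _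
  have hw₂0 : 0 ≤ w₂ := norm_nonneg _
  -- step A : g (xhat θ) ≥ g xtilde₁ - w₁ ε₁ - Lg/2 ε₁²
  have dA := descent_core g Lg hLg.le hgdiff hglip xtilde₁ (xhat θ)
  have nA : ‖xhat θ - xtilde₁‖ ≤ ε₁ := by rwa [norm_sub_rev]
  have iA : |(inner ℝ (gradient g xtilde₁) (xhat θ - xtilde₁) : ℝ)| ≤ w₁ * ε₁ :=
    (abs_real_inner_le_norm _ _).trans (mul_le_mul_of_nonneg_left nA hw₁0)
  have sA : ‖xhat θ - xtilde₁‖ ^ 2 ≤ ε₁ ^ 2 := by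
    exact pow_le_pow_left₀ (norm_nonneg _) nA 2
  have stepA : g (xhat θ) ≤ g xtilde₁ + w₁ * ε₁ + Lg / 2 * ε₁ ^ 2 := by
    have h1 := (abs_le.1 dA).2
    have h2 := (abs_le.1 iA).2
    have h3 : Lg / 2 * ‖xhat θ - xtilde₁‖ ^ 2 ≤ Lg / 2 * ε₁ ^ 2 :=
      mul_le_mul_of_nonneg_left sA (by positivity)
    linarith
  -- step B : g xtilde₂ ≤ g (xhat θ') + w₂ ε₂ + Lg/2 ε₂²
  have dB := descent_core g Lg hLg.le hgdiff hglip xtilde₂ (xhat θ')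
  have nB : ‖xhat θ' - xtilde₂‖ ≤ ε₂ := by rwa [norm_sub_rev]
  have iB : |(inner ℝ (gradient g xtilde₂) (xhat θ' - xtilde₂) : ℝ)| ≤ w₂ * ε₂ :=
    (abs_real_inner_le_norm _ _).trans (mul_le_mul_of_nonneg_left nB hw₂0)
  have sB : ‖xhat θ' - xtilde₂‖ ^ 2 ≤ ε₂ ^ 2 := by
    exact pow_le_pow_left₀ (norm_nonneg _) nB 2
  have stepB : g xtilde₂ ≤ g (xhat θ') + w₂ * ε₂ + Lg / 2 * ε₂ ^ 2 := by
    have h1 := (abs_le.1 dB).1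
    have h2 := (abs_le.1 iB).1
    have h3 : Lg / 2 * ‖xhat θ' - xtilde₂‖ ^ 2 ≤ Lg / 2 * ε₂ ^ 2 :=
      mul_le_mul_of_nonneg_left sB (by positivity)
    linarith
  -- step C : f θ' ≤ f θ - α η ‖z‖² + Lf/2 α² ‖z‖²
  set f : EuclideanSpace ℝ (Fin d) → ℝ := fun θ => g (xhat θ) with hfdef
  have dC := descent_core f Lf hLf.le hfdiff hflip θ θ'
  have hdiff : θ' - θ = -(α • z) := by simp [hθ']
  have hnorm : ‖θ' - θ‖ ^ 2 = α ^ 2 * ‖z‖ ^ 2 := by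
    rw [hdiff, norm_neg, norm_smul]
    simp [abs_of_nonneg hα, mul_pow]
  have hinner : (inner ℝ (gradient f θ) (θ' - θ) : ℝ) = -α * inner ℝ (gradient f θ) z := by
    rw [hdiff]
    simp [inner_neg_right, inner_smul_right]
  have hproj : η * ‖z‖ ^ 2 ≤ (inner ℝ (gradient f θ) z : ℝ) := by
    have h1 : (inner ℝ (z - gradient f θ) z : ℝ) ≤ (1 - η) * ‖z‖ * ‖z‖ := by
      calc (inner ℝ (z - gradient f θ) z : ℝ) ≤ ‖z - gradient f θ‖ * ‖z‖ :=
            real_inner_le_norm _ _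
        _ ≤ (1 - η) * ‖z‖ * ‖z‖ := by
            exact mul_le_mul_of_nonneg_right herr (norm_nonneg z)
    have h2 : (inner ℝ (z - gradient f θ) z : ℝ) = ‖z‖ ^ 2 - inner ℝ (gradient f θ) z := by
      rw [inner_sub_left, real_inner_self_eq_norm_sq]
    have h3 : (1 - η) * ‖z‖ * ‖z‖ = ‖z‖ ^ 2 - η * ‖z‖ ^ 2 := by ring
    linarith
  have stepC : f θ' ≤ f θ + (-α * η + Lf / 2 * α ^ 2) * ‖z‖ ^ 2 := by
    have h1 := (abs_le.1 dC).2
    rw [hinner, hnorm] at h1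
    have h2 : α * (η * ‖z‖ ^ 2) ≤ α * inner ℝ (gradient f θ) z :=
      mul_le_mul_of_nonneg_left hproj hα
    nlinarith [h1, h2]
  have hgoalA : g (xhat θ) = f θ := rfl
  have hgoalB : g (xhat θ') = f θ' := rfl
  have hz2 : 0 ≤ ‖z‖ ^ 2 := sq_nonneg _
  have hεb0 : 0 ≤ εb := le_trans hε₁ hεb1
  have m1 : w₁ * ε₁ ≤ w₁ * εb := mul_le_mul_of_nonneg_left hεb1 hw₁0
  have m2 : w₂ * ε₂ ≤ w₂ * εb := mul_le_mul_of_nonneg_left hεb2 hw₂0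
  have m3 : Lg * ε₁ ^ 2 ≤ Lg * εb ^ 2 :=
    mul_le_mul_of_nonneg_left (pow_le_pow_left₀ hε₁ hεb1 2) hLg.le
  have m4 : Lg * ε₂ ^ 2 ≤ Lg * εb ^ 2 :=
    mul_le_mul_of_nonneg_left (pow_le_pow_left₀ hε₂ hεb2 2) hLg.le
  have mw1 : 0 ≤ w₁ * εb := mul_nonneg hw₁0 hεb0
  have mw2 : 0 ≤ w₂ * εb := mul_nonneg hw₂0 hεb0
  linarith [stepA, stepB, stepC, m1, m2, m3, m4, mw1, mw2]
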